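/- Let 0 < c < 1 and β ≥ 2/c − 1. Define ψ(x) = (1−x)^{β(1−x)} (1−y)^{β(1−y)} / (x^x y^y) for 0 ≤ x ≤ c, where y = c − x (with the convention 0^0 = 1). Then the minimum of ψ on [0, c] is attained either at an endpoint x = 0 or x = c, or at the center x = c/2; that is, min_{0 ≤ x ≤ c} ψ(x) = min{ψ(0), ψ(c/2), ψ(c)}. -/

import Mathlib

open Real Set

/-- The function `ψ(x) = (1-x)^(β(1-x)) (1-y)^(β(1-y)) / (x^x y^y)` with
`y = c - x`, using real powers (`Real.rpow`, so that `0^0 = 1`). -/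
noncomputable def psiFn (c β x : ℝ) : ℝ :=
  ((1 - x) ^ (β * (1 - x)) * (1 - (c - x)) ^ (β * (1 - (c - x)))) /
    (x ^ x * (c - x) ^ (c - x))

/-- log of ψ -/
noncomputable def fA (c β x : ℝ) : ℝ :=
  β * ((1 - x) * Real.log (1 - x)) + β * ((1 - (c - x)) * Real.log (1 - (c - x)))
    - x * Real.log x - (c - x) * Real.log (c - x)

/-- derivative of fA -/
noncomputable def gA (c β x : ℝ) : ℝ :=
  β * (Real.log (1 - (c - x)) - Real.log (1 - x)) + (Real.log (c - x) - Real.log x)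

lemma rpow_self_exp {t : ℝ} (ht : 0 ≤ t) : t ^ t = Real.exp (t * Real.log t) := by
  rcases eq_or_lt_of_le ht with h | h
  · simp [← h]
  · rw [Real.rpow_def_of_pos h, mul_comm]

lemma psi_eq_exp (c β : ℝ) (hc1 : c < 1) {x : ℝ} (hx : x ∈ Icc 0 c) :
    psiFn c β x = Real.exp (fA c β x) := by
  obtain ⟨h0, hxc⟩ := hx
  have h1x : 0 < 1 - x := by linarith
  have h1y : 0 < 1 - (c - x) := by linarith
  have hy0 : 0 ≤ c - x := by linarith
  rw [psiFn, Real.rpow_def_of_pos h1x, Real.rpow_def_of_pos h1y,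
    rpow_self_exp h0, rpow_self_exp hy0, ← Real.exp_add, ← Real.exp_add, ← Real.exp_sub]
  congr 1
  rw [fA]; ring

lemma hasDeriv_mul_log {u : ℝ} (hu : u ≠ 0) :
    HasDerivAt (fun t : ℝ => t * Real.log t) (Real.log u + 1) u := by
  exact Real.hasDerivAt_mul_log hu

lemma fA_deriv (c β : ℝ) {x : ℝ} (hx0 : 0 < x) (hxc : x < c) (hc1 : c < 1) :
    HasDerivAt (fA c β) (gA c β x) x := by
  have h1x : (1 : ℝ) - x ≠ 0 := by intro h; nlinarith
  have h1y : (1 : ℝ) - (c - x) ≠ 0 := by intro h; nlinarith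
  have hx : x ≠ 0 := ne_of_gt hx0
  have hy : c - x ≠ 0 := by intro h; nlinarith
  have d1 : HasDerivAt (fun t : ℝ => (1 - t) * Real.log (1 - t))
      ((Real.log (1 - x) + 1) * (0 - 1)) x :=
    (hasDeriv_mul_log h1x).comp x ((hasDerivAt_const x (1 : ℝ)).sub (hasDerivAt_id x))
  have d2 : HasDerivAt (fun t : ℝ => (1 - (c - t)) * Real.log (1 - (c - t)))
      ((Real.log (1 - (c - x)) + 1) * (0 - (0 - 1))) x :=
    by
      have e : HasDerivAt (fun t : ℝ => 1 - (c - t)) (0 - (0 - 1)) x :=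
        (hasDerivAt_const x (1 : ℝ)).sub ((hasDerivAt_const x c).sub (hasDerivAt_id x))
      exact (hasDeriv_mul_log h1y).comp x e
  have d3 : HasDerivAt (fun t : ℝ => t * Real.log t) (Real.log x + 1) x := hasDeriv_mul_log hx
  have d4 : HasDerivAt (fun t : ℝ => (c - t) * Real.log (c - t))
      ((Real.log (c - x) + 1) * (0 - 1)) x :=
    (hasDeriv_mul_log hy).comp x ((hasDerivAt_const x c).sub (hasDerivAt_id x))
  have h := (((d1.const_mul β).add (d2.const_mul β)).sub d3).sub d4
  refine HasDerivAt.congr_deriv (h : HasDerivAt (fA c β) _ x) ?_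
  rw [gA]; ring

lemma gA_deriv (c β : ℝ) {x : ℝ} (hx0 : 0 < x) (hxc : x < c) (hc1 : c < 1) :
    HasDerivAt (gA c β)
      (β * ((1 - (c - x))⁻¹ + (1 - x)⁻¹) - ((c - x)⁻¹ + x⁻¹)) x := by
  have h1x : (1 : ℝ) - x ≠ 0 := by intro h; nlinarith
  have h1y : (1 : ℝ) - (c - x) ≠ 0 := by intro h; nlinarith
  have hx : x ≠ 0 := ne_of_gt hx0
  have hy : c - x ≠ 0 := by intro h; nlinarith
  have d1 : HasDerivAt (fun t : ℝ => Real.log (1 - (c - t))) ((1 - (c - x))⁻¹ * (0 - (0 - 1))) x :=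
    by
      have e : HasDerivAt (fun t : ℝ => 1 - (c - t)) (0 - (0 - 1)) x :=
        (hasDerivAt_const x (1 : ℝ)).sub ((hasDerivAt_const x c).sub (hasDerivAt_id x))
      exact (Real.hasDerivAt_log h1y).comp x e
  have d2 : HasDerivAt (fun t : ℝ => Real.log (1 - t)) ((1 - x)⁻¹ * (0 - 1)) x :=
    (Real.hasDerivAt_log h1x).comp x ((hasDerivAt_const x (1 : ℝ)).sub (hasDerivAt_id x))
  have d3 : HasDerivAt (fun t : ℝ => Real.log (c - t)) ((c - x)⁻¹ * (0 - 1)) x :=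
    (Real.hasDerivAt_log hy).comp x ((hasDerivAt_const x c).sub (hasDerivAt_id x))
  have d4 : HasDerivAt (fun t : ℝ => Real.log t) x⁻¹ x := Real.hasDerivAt_log hx
  have h := ((d1.sub d2).const_mul β).add (d3.sub d4)
  refine HasDerivAt.congr_deriv (h : HasDerivAt (gA c β) _ x) ?_
  ring

lemma fA_continuous (c β : ℝ) : Continuous (fA c β) := by
  have hF : Continuous fun t : ℝ => t * Real.log t := Real.continuous_mul_log
  exact (((continuous_const.mul (hF.comp (continuous_const.sub continuous_id))).add
      (continuous_const.mul
        (hF.comp (continuous_const.sub (continuous_const.sub continuous_id))))).sub hF).sub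
    (hF.comp (continuous_const.sub continuous_id))

lemma gA_half (c β : ℝ) : gA c β (c / 2) = 0 := by
  have h : c - c / 2 = c / 2 := by ring
  rw [gA, h]; ring

set_option maxHeartbeats 2000000 in
lemma keyLemma (c β : ℝ) (hc0 : 0 < c) (hc1 : c < 1) (hβ : 2 / c - 1 ≤ β) :
    ∀ x ∈ Icc (0 : ℝ) (c / 2), min (fA c β 0) (fA c β (c / 2)) ≤ fA c β x := by
  have hcβ : 2 - c ≤ c * β := by
    have h2 : 2 / c ≤ β + 1 := by linarith
    have := (div_le_iff₀ hc0).mp h2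
    nlinarith
  obtain ⟨D, hD_def⟩ : ∃ D : ℝ, D = β * (2 - c) - c := ⟨_, rfl⟩
  have hkey : (2 - c) * (2 - c) ≤ (2 - c) * (c * β) :=
    mul_le_mul_of_nonneg_left hcβ (by linarith)
  have hcD4 : 4 * (1 - c) ≤ c * D := by rw [hD_def]; nlinarith
  have hD : 0 < D := by nlinarith
  have hβ2c : 4 * c * (1 - c) ≤ c ^ 2 * D := by
    nlinarith [mul_le_mul_of_nonneg_left hcD4 (le_of_lt hc0)]
  obtain ⟨r, hr_def⟩ : ∃ r : ℝ, r = Real.sqrt (c ^ 2 - 4 * c * (1 - c) / D) := ⟨_, rfl⟩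
  have harg : 0 ≤ c ^ 2 - 4 * c * (1 - c) / D := by
    rw [sub_nonneg, div_le_iff₀ hD]; nlinarith
  have hr2 : r ^ 2 = c ^ 2 - 4 * c * (1 - c) / D := by rw [hr_def]; exact Real.sq_sqrt harg
  have hr0 : 0 ≤ r := hr_def ▸ Real.sqrt_nonneg _
  have hrc : r < c := by
    have h1 : 0 < 4 * c * (1 - c) / D := div_pos (by nlinarith) hD
    nlinarith
  obtain ⟨s, hs_def⟩ : ∃ s : ℝ, s = (c - r) / 2 := ⟨_, rfl⟩
  have hs0 : 0 < s := by rw [hs_def]; linarith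
  have hs2 : s ≤ c / 2 := by rw [hs_def]; linarith
  have hqs : D * (s * (c - s)) = c * (1 - c) := by
    have h1 : s * (c - s) = (c ^ 2 - r ^ 2) / 4 := by rw [hs_def]; ring
    rw [h1, hr2]
    field_simp
    ring
  -- rewrite of the derivative of gA as a fraction
  have hGfrac : ∀ t : ℝ, 0 < t → t < c →
      β * ((1 - (c - t))⁻¹ + (1 - t)⁻¹) - ((c - t)⁻¹ + t⁻¹)
        = (D * (t * (c - t)) - c * (1 - c)) / ((t * (c - t)) * ((1 - t) * (1 - (c - t)))) := by
    intro t ht0 htc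
    have h1 : (1 : ℝ) - t ≠ 0 := by intro h; nlinarith
    have h2 : (1 : ℝ) - (c - t) ≠ 0 := by intro h; nlinarith
    have h3 : t ≠ 0 := ne_of_gt ht0
    have h4 : c - t ≠ 0 := by intro h; nlinarith
    rw [hD_def]
    field_simp
    ring
  -- gA is monotone on [s, c/2]
  have hmono_g : MonotoneOn (gA c β) (Icc s (c / 2)) := by
    apply monotoneOn_of_deriv_nonneg (convex_Icc _ _)
    · intro t ht
      have ht0 : 0 < t := lt_of_lt_of_le hs0 ht.1
      have htc : t < c := lt_of_le_of_lt ht.2 (by linarith)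
      exact (gA_deriv c β ht0 htc hc1).continuousAt.continuousWithinAt
    · intro t ht
      rw [interior_Icc] at ht
      have ht0 : 0 < t := lt_trans hs0 ht.1
      have htc : t < c := lt_trans ht.2 (by linarith)
      exact (gA_deriv c β ht0 htc hc1).differentiableAt.differentiableWithinAt
    · intro t ht
      rw [interior_Icc] at ht
      have ht0 : 0 < t := lt_trans hs0 ht.1
      have ht2 : t < c / 2 := ht.2
      have htc : t < c := by linarith
      rw [(gA_deriv c β ht0 htc hc1).deriv, hGfrac t ht0 htc]
      apply div_nonneg
      · have hq : s * (c - s) ≤ t * (c - t) := by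
          nlinarith [mul_nonneg (show (0:ℝ) ≤ t - s by linarith [ht.1])
            (show (0:ℝ) ≤ c - t - s by linarith [ht2, hs2])]
        nlinarith [mul_le_mul_of_nonneg_left hq (le_of_lt hD)]
      · have : 0 < 1 - (c - t) := by nlinarith
        have : 0 < 1 - t := by nlinarith
        have : 0 < c - t := by nlinarith
        positivity
  -- gA is antitone on [a, s] for 0 < a
  have hanti_g : ∀ a : ℝ, 0 < a → a ≤ s → AntitoneOn (gA c β) (Icc a s) := by
    intro a ha0 has
    apply antitoneOn_of_deriv_nonpos (convex_Icc _ _)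
    · intro t ht
      have ht0 : 0 < t := lt_of_lt_of_le ha0 ht.1
      have htc : t < c := by have := ht.2; nlinarith
      exact (gA_deriv c β ht0 htc hc1).continuousAt.continuousWithinAt
    · intro t ht
      rw [interior_Icc] at ht
      have ht0 : 0 < t := lt_trans ha0 ht.1
      have htc : t < c := by have := ht.2; nlinarith
      exact (gA_deriv c β ht0 htc hc1).differentiableAt.differentiableWithinAt
    · intro t ht
      rw [interior_Icc] at ht
      have ht0 : 0 < t := lt_trans ha0 ht.1
      have hts : t < s := ht.2
      have htc : t < c := by nlinarith
      rw [(gA_deriv c β ht0 htc hc1).deriv, hGfrac t ht0 htc]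
      apply div_nonpos_of_nonpos_of_nonneg
      · have hq : t * (c - t) ≤ s * (c - s) := by
          nlinarith [mul_nonneg (show (0:ℝ) ≤ s - t by linarith)
            (show (0:ℝ) ≤ c - s - t by linarith [hs2])]
        nlinarith [mul_le_mul_of_nonneg_left hq (le_of_lt hD)]
      · have : 0 < 1 - (c - t) := by nlinarith
        have : 0 < 1 - t := by nlinarith
        have : 0 < c - t := by nlinarith
        positivity
  -- main argument
  intro x hx
  obtain ⟨hx0, hx2⟩ := hx
  rcases eq_or_lt_of_le hx0 with h | hx0'
  · rw [← h]; exact min_le_left _ _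
  by_cases hcase : ∃ a, (0 < a ∧ a ≤ x) ∧ gA c β a ≤ 0
  · obtain ⟨a, ⟨ha0, hax⟩, hga⟩ := hcase
    have hac2 : a ≤ c / 2 := le_trans hax hx2
    -- gA ≤ 0 on [a, c/2]
    have hgle : ∀ t ∈ Icc a (c / 2), gA c β t ≤ 0 := by
      intro t ⟨hat, ht2⟩
      rcases le_total t s with h | h
      · have has : a ≤ s := le_trans hat h
        have := hanti_g a ha0 has ⟨le_refl a, has⟩ ⟨hat, h⟩ hat
        linarith
      · have := hmono_g ⟨h, ht2⟩ ⟨hs2, le_refl _⟩ ht2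
        rw [gA_half] at this
        linarith
    have hanti_f : AntitoneOn (fA c β) (Icc a (c / 2)) := by
      apply antitoneOn_of_deriv_nonpos (convex_Icc _ _)
        ((fA_continuous c β).continuousOn)
      · intro t ht
        rw [interior_Icc] at ht
        have ht0 : 0 < t := lt_trans ha0 ht.1
        have htc : t < c := by have := ht.2; linarith
        exact (fA_deriv c β ht0 htc hc1).differentiableAt.differentiableWithinAt
      · intro t ht
        rw [interior_Icc] at ht
        have ht0 : 0 < t := lt_trans ha0 ht.1
        have htc : t < c := by have := ht.2; linarith
        rw [(fA_deriv c β ht0 htc hc1).deriv]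
        exact hgle t ⟨le_of_lt ht.1, le_of_lt ht.2⟩
    have := hanti_f ⟨hax, hx2⟩ ⟨hac2, le_refl _⟩ hx2
    exact le_trans (min_le_right _ _) this
  · push_neg at hcase
    have hmono_f : MonotoneOn (fA c β) (Icc 0 x) := by
      apply monotoneOn_of_deriv_nonneg (convex_Icc _ _)
        ((fA_continuous c β).continuousOn)
      · intro t ht
        rw [interior_Icc] at ht
        have ht0 : 0 < t := ht.1
        have htc : t < c := by have := ht.2; linarith
        exact (fA_deriv c β ht0 htc hc1).differentiableAt.differentiableWithinAt
      · intro t ht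
        rw [interior_Icc] at ht
        have ht0 : 0 < t := ht.1
        have htc : t < c := by have := ht.2; linarith
        rw [(fA_deriv c β ht0 htc hc1).deriv]
        exact le_of_lt (hcase t ⟨ht0, le_of_lt ht.2⟩)
    have := hmono_f ⟨le_refl _, le_of_lt hx0'⟩ ⟨le_of_lt hx0', le_refl _⟩ (le_of_lt hx0')
    exact le_trans (min_le_left _ _) this

lemma psi_symm (c β x : ℝ) : psiFn c β (c - x) = psiFn c β x := by
  unfold psiFn
  rw [sub_sub_cancel]
  ring

/-- Calculus lemma: for `0 < c < 1` and `β ≥ 2/c - 1`, the minimum of `ψ` on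
`[0, c]` is attained either at an endpoint `x = 0`, `x = c`, or at the center
`x = c/2`; i.e. `min {ψ(0), ψ(c/2), ψ(c)} ≤ ψ(x)` for all `x ∈ [0, c]`. -/
theorem psi_min_endpoints_or_center (c β : ℝ) (hc0 : 0 < c) (hc1 : c < 1)
    (hβ : 2 / c - 1 ≤ β) :
    ∀ x ∈ Set.Icc (0 : ℝ) c,
      min (min (psiFn c β 0) (psiFn c β (c / 2))) (psiFn c β c) ≤ psiFn c β x := by
  intro x hx
  have key := keyLemma c β hc0 hc1 hβ
  have h0m : (0 : ℝ) ∈ Icc (0 : ℝ) c := ⟨le_refl _, le_of_lt hc0⟩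
  have h2m : c / 2 ∈ Icc (0 : ℝ) c := ⟨by linarith, by linarith⟩
  have e0 := psi_eq_exp c β hc1 h0m
  have e2 := psi_eq_exp c β hc1 h2m
  refine le_trans (min_le_left _ _) ?_
  rcases le_total x (c / 2) with h | h
  · have h1 := key x ⟨hx.1, h⟩
    have ex := psi_eq_exp c β hc1 hx
    rw [e0, e2, ex, ← Real.exp_monotone.map_min]
    exact Real.exp_le_exp.2 h1
  · have hx' : c - x ∈ Icc (0 : ℝ) (c / 2) := ⟨by linarith [hx.2], by linarith⟩
    have h1 := key _ hx'
    have ex := psi_eq_exp c β hc1 (⟨hx'.1, by linarith [hx.1]⟩ : c - x ∈ Icc (0:ℝ) c)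
    rw [← psi_symm c β x, e0, e2, ex, ← Real.exp_monotone.map_min]
    exact Real.exp_le_exp.2 h1
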